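/- Under the threshold policy, the set of arcs simultaneously carrying a transition (u_{ij} = 1) forms a union of node-disjoint directed paths: since at most one token enters and at most one token leaves each node, and the network has no non-positive circuits, the subgraph induced by active arcs is acyclic with all in- and out-degrees at most 1. -/

import Mathlib

def arcCost {V : Type*} (γ : V → V → ℤ) (p : List V) : ℤ :=
  ((p.zip p.tail).map fun q => γ q.1 q.2).sum

def IsWalk {V : Type*} (A : V → V → Prop) (i j : V) (p : List V) : Prop :=
  p.Chain' A ∧ p.head? = some i ∧ p.getLast? = some j

def IsPath {V : Type*} (A : V → V → Prop) (i j : V) (p : List V) : Prop :=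
  IsWalk A i j p ∧ p.Nodup

/-- A directed circuit: a walk of at least one arc whose first and last nodes coincide. -/
def IsCircuit {V : Type*} (A : V → V → Prop) (p : List V) : Prop :=
  p.Chain' A ∧ 2 ≤ p.length ∧ p.head? = p.getLast?
lemma arcCost_telescope {V : Type*} (γ : V → V → ℤ) (x : V → ℤ) :
    ∀ (p : List V), p.Chain' (fun a b => γ a b ≤ x a - x b) →
      ∀ a b, p.head? = some a → p.getLast? = some b → arcCost γ p ≤ x a - x b
  | [], _, a, b, h, _ => by simp at h
  | [c], _, a, b, ha, hb => by
      simp at ha hb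
      subst ha hb
      simp [arcCost]
  | c :: d :: p, hch, a, b, ha, hb => by
      simp at ha
      subst ha
      simp only [List.Chain', List.isChain_cons_cons] at hch
      have hb' : (d :: p).getLast? = some b := by
        simpa [List.getLast?_cons_cons] using hb
      have IH := arcCost_telescope γ x (d :: p) hch.2 d b rfl hb'
      have : arcCost γ (c :: d :: p) = γ c d + arcCost γ (d :: p) := by
        simp [arcCost]
      rw [this]
      linarith [hch.1]

/-- under the threshold policy, the set of simultaneously active arcs
(`u i j = 1`) forms a union of node-disjoint directed paths: each node has in-degree
and out-degree at most one in the active subgraph, and the active subgraph contains no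
directed circuit. -/
theorem active_arcs_form_paths {V : Type*} [Fintype V] (A : V → V → Prop)
    (γ : V → V → ℤ) (x : V → ℤ) (u : V → V → ℤ) (ν : V → ℤ)
    (hcirc : ∀ c, IsCircuit A c → 0 < arcCost γ c)
    (hadm : ∀ a b, A a b → x a - x b ≤ γ a b)
    (hu01 : ∀ i j, u i j = 0 ∨ u i j = 1)
    (hν01 : ∀ i, ν i = 0 ∨ ν i = 1)
    (hin : ∀ i, (∑ j, u j i) + ν i ≤ 1)
    (hout : ∀ i, ∑ j, u i j ≤ 1)
    (hthr : ∀ i j, u i j = 1 →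
      A i j ∧ γ i j < x i + (∑ l, u l i) + ν i - x j) :
    (¬ ∃ p, IsCircuit (fun a b => u a b = 1) p) ∧
      (∀ i j j', u i j = 1 → u i j' = 1 → j = j') ∧
      (∀ i j j', u j i = 1 → u j' i = 1 → j = j') := by
  have hstep : ∀ a b, u a b = 1 → γ a b ≤ x a - x b := by
    intro a b h
    have h1 := (hthr a b h).2
    have h2 := hin a
    omega
  have hnn : ∀ i j, 0 ≤ u i j := by
    intro i j; rcases hu01 i j with h | h <;> omega
  have hdeg : ∀ (f : V → ℤ), (∀ k, 0 ≤ f k) → (∑ k, f k) ≤ 1 →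
      ∀ j j', f j = 1 → f j' = 1 → j = j' := by
    intro f hf hs j j' hj hj'
    classical
    by_contra hne
    have : ({j, j'} : Finset V).sum f ≤ ∑ k, f k :=
      Finset.sum_le_sum_of_subset_of_nonneg (Finset.subset_univ _)
        (fun k _ _ => hf k)
    rw [Finset.sum_pair hne] at this
    omega
  refine ⟨?_, ?_, ?_⟩
  · rintro ⟨p, hch, hlen, hhl⟩
    have hA : p.Chain' A := hch.imp (fun _ _ h => (hthr _ _ h).1)
    have hpos := hcirc p ⟨hA, hlen, hhl⟩
    obtain ⟨a, ha⟩ : ∃ a, p.head? = some a := by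
      cases p with
      | nil => simp at hlen
      | cons c q => exact ⟨c, rfl⟩
    have hle := arcCost_telescope γ x p (hch.imp (fun _ _ h => hstep _ _ h)) a a ha
      (hhl ▸ ha)
    omega
  · intro i j j' hj hj'
    exact hdeg (u i) (hnn i) (hout i) j j' hj hj'
  · intro i j j' hj hj'
    have hν : 0 ≤ ν i := by rcases hν01 i with h | h <;> omega
    have : (∑ l, u l i) ≤ 1 := by have := hin i; omega
    exact hdeg (fun l => u l i) (fun l => hnn l i) this j j' hj hj'
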